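/- Let α : X → [1, ∞] and suppose: (i) there exist σ > 0 and C > 1 with α(h_q x) ≤ C(1 + |q|)^σ α(x) for all q ∈ ℝ, x ∈ X; (ii) there exist ā ∈ (0,1), b̄ > 0 and t₀ > 0 such that ∫_{-1}^{1} α(g_t h_s x) ds ≤ ā α(x) + b̄ for all t > t₀ and x ∈ X. Then for every a ∈ (0,1) there exist b > 0 and t₀' > 0 such that for all t > t₀' and x ∈ X, ∫_ℝ α(g_t h_s x) e^{-s²} ds ≤ a α(x) + b, provided ā can be chosen arbitrarily small (i.e. (ii) holds for every ā ∈ (0,1) with b̄ independent of ā). -/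

import Mathlib

open scoped ENNReal
open MeasureTheory


lemma aux_nat_summable {σ : ℝ} (hσ : 0 < σ) :
    Summable (fun k : ℕ => Real.exp (-(max (2*(k:ℝ) - 1) 0)^2) * (1 + 2*(k:ℝ)) ^ σ) := by
  set N := ⌈σ⌉₊ with hN
  set r : ℝ := Real.exp (-2) with hr
  have hr0 : 0 ≤ r := (Real.exp_pos _).le
  have hr1 : r < 1 := Real.exp_lt_one_iff.2 (by norm_num)
  have hb : Summable (fun k : ℕ =>
      Real.exp 1 * 3^N * ((k:ℝ)^N * r^k) + Real.exp 1 * 3^N * r^k) := by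
    have h1 : Summable (fun k : ℕ => (k:ℝ)^N * r^k) :=
      summable_pow_mul_geometric_of_norm_lt_one (R := ℝ) N
        (r := r) (by rw [Real.norm_eq_abs, abs_of_nonneg hr0]; exact hr1)
    have h2 : Summable (fun k : ℕ => r^k) := summable_geometric_of_lt_one hr0 hr1
    exact (h1.mul_left _).add (h2.mul_left _)
  refine Summable.of_nonneg_of_le (fun k => ?_) (fun k => ?_) hb
  · positivity
  · have hk0 : (0:ℝ) ≤ (k:ℝ) := Nat.cast_nonneg k
    have h1 : (1 + 2*(k:ℝ)) ^ σ ≤ (1 + 2*(k:ℝ))^(N:ℕ) := by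
      rw [← Real.rpow_natCast (1 + 2*(k:ℝ)) N]
      exact Real.rpow_le_rpow_of_exponent_le (by linarith) (Nat.le_ceil σ)
    have h2 : Real.exp (-(max (2*(k:ℝ) - 1) 0)^2) ≤ Real.exp 1 * r^k := by
      rw [hr, ← Real.exp_nat_mul, ← Real.exp_add]
      apply Real.exp_le_exp.2
      rcases Nat.eq_zero_or_pos k with hk | hk
      · subst hk; norm_num
      · have hk1 : (1:ℝ) ≤ (k:ℝ) := by exact_mod_cast hk
        have : max (2*(k:ℝ) - 1) 0 = 2*(k:ℝ) - 1 := max_eq_left (by linarith)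
        rw [this]; nlinarith
    have h3 : (1 + 2*(k:ℝ))^(N:ℕ) ≤ 3^N * (k:ℝ)^N + 3^N := by
      rcases Nat.eq_zero_or_pos k with hk | hk
      · subst hk
        simp only [Nat.cast_zero, mul_zero, add_zero, one_pow]
        have : (0:ℝ) ≤ 3^N * (0:ℝ)^N := by positivity
        have h4 : (1:ℝ) ≤ 3^N := one_le_pow₀ (by norm_num)
        linarith
      · have hk1 : (1:ℝ) ≤ (k:ℝ) := by exact_mod_cast hk
        have : (1 + 2*(k:ℝ))^N ≤ (3*(k:ℝ))^N :=
          pow_le_pow_left₀ (by linarith) (by linarith) N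
        rw [mul_pow] at this
        have h5 : (0:ℝ) ≤ 3^N := by positivity
        linarith
    calc Real.exp (-(max (2*(k:ℝ) - 1) 0)^2) * (1 + 2*(k:ℝ)) ^ σ
        ≤ (Real.exp 1 * r^k) * ((1 + 2*(k:ℝ))^(N:ℕ)) :=
          mul_le_mul h2 h1 (Real.rpow_nonneg (by linarith) _) (by positivity)
      _ ≤ (Real.exp 1 * r^k) * (3^N * (k:ℝ)^N + 3^N) :=
          mul_le_mul_of_nonneg_left h3 (by positivity)
      _ = Real.exp 1 * 3^N * ((k:ℝ)^N * r^k) + Real.exp 1 * 3^N * r^k := by ring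

lemma aux_int_summable {σ : ℝ} (hσ : 0 < σ) :
    Summable (fun n : ℤ => Real.exp (-(max (2*|(n:ℝ)| - 1) 0)^2) * (1 + 2*|(n:ℝ)|) ^ σ) := by
  apply Summable.of_nat_of_neg
  · have := aux_nat_summable hσ
    refine this.congr (fun k => ?_)
    push_cast
    rw [abs_of_nonneg (Nat.cast_nonneg k)]
  · have := aux_nat_summable hσ
    refine this.congr (fun k => ?_)
    push_cast
    rw [abs_neg, abs_of_nonneg (Nat.cast_nonneg k)]

lemma translate_lintegral (F : ℝ → ℝ≥0∞) (c : ℝ) :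
    ∫⁻ s in Set.Icc (c - 1) (c + 1), F s = ∫⁻ u in Set.Icc (-1 : ℝ) 1, F (u + c) := by
  have h1 : (volume : Measure ℝ).restrict (Set.Icc (c-1) (c+1)) =
      Measure.map (fun u : ℝ => u + c) (volume.restrict (Set.Icc (-1 : ℝ) 1)) := by
    calc (volume : Measure ℝ).restrict (Set.Icc (c-1) (c+1))
        = (Measure.map (fun u : ℝ => u + c) volume).restrict (Set.Icc (c-1) (c+1)) := by
          rw [map_add_right_eq_self]
      _ = Measure.map (fun u : ℝ => u + c)
            (volume.restrict ((fun u : ℝ => u + c) ⁻¹' Set.Icc (c-1) (c+1))) :=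
          Measure.restrict_map (measurable_add_const c) measurableSet_Icc
      _ = Measure.map (fun u : ℝ => u + c) (volume.restrict (Set.Icc (-1 : ℝ) 1)) := by
          rw [Set.preimage_add_const_Icc]; norm_num
  rw [h1]
  exact lintegral_map_equiv F (MeasurableEquiv.addRight c)

/-- from a polynomial bound on `α ∘ h_q` and integral estimates over `[-1,1]`
    (with arbitrarily small contraction factor `ā` and uniform `b̄`), deduce Gaussian-weighted
    integral estimates over all of ℝ with any contraction factor `a ∈ (0,1)`. -/
theorem gaussian_integral_estimate_from_interval {X : Type*} (g h : ℝ → X → X)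
    (α : X → ℝ≥0∞) (hα1 : ∀ x, 1 ≤ α x)
    (hadd : ∀ s s' : ℝ, ∀ x : X, h s (h s' x) = h (s + s') x)
    (hpoly : ∃ σ > (0 : ℝ), ∃ C > (1 : ℝ), ∀ q : ℝ, ∀ x : X,
      α (h q x) ≤ ENNReal.ofReal (C * (1 + |q|) ^ σ) * α x)
    (hhoro : ∃ bbar > (0 : ℝ), ∀ abar ∈ Set.Ioo (0 : ℝ) 1, ∃ t₀ > (0 : ℝ),
      ∀ t > t₀, ∀ x : X,
        (∫⁻ s in Set.Icc (-1 : ℝ) 1, α (g t (h s x))) ≤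
          ENNReal.ofReal abar * α x + ENNReal.ofReal bbar) :
    ∀ a ∈ Set.Ioo (0 : ℝ) 1, ∃ b > (0 : ℝ), ∃ t₀' > (0 : ℝ), ∀ t > t₀', ∀ x : X,
      (∫⁻ s : ℝ, α (g t (h s x)) * ENNReal.ofReal (Real.exp (-s ^ 2))) ≤
        ENNReal.ofReal a * α x + ENNReal.ofReal b := by
  obtain ⟨σ, hσ, C, hC, hpoly⟩ := hpoly
  obtain ⟨bbar, hbbar, hhoro⟩ := hhoro
  intro a ha
  obtain ⟨ha0, ha1⟩ := ha
  set m : ℤ → ℝ := fun n => max (2*|(n:ℝ)| - 1) 0 with hm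
  have hm0 : ∀ n : ℤ, 0 ≤ m n := fun n => le_max_right _ _
  set f1 : ℤ → ℝ := fun n => Real.exp (-(m n)^2) * (1 + 2*|(n:ℝ)|) ^ σ with hf1
  set f2 : ℤ → ℝ := fun n => Real.exp (-(m n)^2) with hf2
  have hf1nn : ∀ n, 0 ≤ f1 n := fun n => by
    have h0 : (0:ℝ) ≤ (1 + 2*|(n:ℝ)|) ^ σ := Real.rpow_nonneg (by positivity) _
    exact mul_nonneg (Real.exp_pos _).le h0
  have hf2nn : ∀ n, 0 ≤ f2 n := fun n => (Real.exp_pos _).le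
  have hsum1 : Summable f1 := aux_int_summable hσ
  have hsum2 : Summable f2 := by
    refine Summable.of_nonneg_of_le hf2nn (fun n => ?_) hsum1
    have h1 : (1:ℝ) ≤ (1 + 2*|(n:ℝ)|) ^ σ :=
      Real.one_le_rpow (by linarith [abs_nonneg ((n:ℝ))]) hσ.le
    calc f2 n = f2 n * 1 := (mul_one _).symm
      _ ≤ f2 n * (1 + 2*|(n:ℝ)|) ^ σ :=
        mul_le_mul_of_nonneg_left h1 (hf2nn n)
  set K := ∑' n, f1 n with hK
  set K2 := ∑' n, f2 n with hK2
  have hK0 : 0 ≤ K := tsum_nonneg hf1nn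
  have hK20 : 0 ≤ K2 := tsum_nonneg hf2nn
  have hC0 : (0:ℝ) < C := by linarith
  set abar := min (a / (C * (K+1))) (1/2) with habar_def
  have habar : abar ∈ Set.Ioo (0:ℝ) 1 := by
    constructor
    · apply lt_min (by positivity) (by norm_num)
    · calc abar ≤ 1/2 := min_le_right _ _
        _ < 1 := by norm_num
  obtain ⟨t₀, ht₀, hint⟩ := hhoro abar habar
  refine ⟨bbar * (K2 + 1), by positivity, t₀, ht₀, fun t ht x => ?_⟩
  -- Per-interval estimate
  have per_n : ∀ n : ℤ,
      (∫⁻ s in Set.Icc (2*(n:ℝ) - 1) (2*(n:ℝ) + 1),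
        α (g t (h s x)) * ENNReal.ofReal (Real.exp (-s ^ 2))) ≤
      ENNReal.ofReal (abar * C * f1 n) * α x + ENNReal.ofReal (bbar * f2 n) := by
    intro n
    set c : ℝ := 2*(n:ℝ) with hc
    have habs : |c| = 2*|(n:ℝ)| := by rw [hc, abs_mul, abs_two]
    rw [translate_lintegral (fun s => α (g t (h s x)) * ENNReal.ofReal (Real.exp (-s ^ 2))) c]
    have hpt : ∀ u ∈ Set.Icc (-1:ℝ) 1,
        α (g t (h (u + c) x)) * ENNReal.ofReal (Real.exp (-(u + c) ^ 2)) ≤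
        ENNReal.ofReal (f2 n) * α (g t (h u (h c x))) := by
      intro u hu
      rw [hadd u c x]
      have hu1 : |u| ≤ 1 := abs_le.2 ⟨hu.1, hu.2⟩
      have hA : m n ≤ |u + c| := by
        have h5 : |c| ≤ |u + c| + |u| := by
          calc |c| = |u + c + (-u)| := by ring_nf
            _ ≤ |u + c| + |(-u)| := abs_add_le _ _
            _ = |u + c| + |u| := by rw [abs_neg]
        apply max_le _ (abs_nonneg _)
        rw [habs] at h5; linarith
      have hsq : (m n)^2 ≤ (u + c)^2 := by
        rw [← sq_abs (u + c)]
        exact pow_le_pow_left₀ (hm0 n) hA 2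
      have hexp : Real.exp (-(u + c)^2) ≤ f2 n :=
        Real.exp_le_exp.2 (by linarith)
      calc α (g t (h (u + c) x)) * ENNReal.ofReal (Real.exp (-(u + c) ^ 2))
          ≤ α (g t (h (u + c) x)) * ENNReal.ofReal (f2 n) :=
            by gcongr
        _ = ENNReal.ofReal (f2 n) * α (g t (h (u + c) x)) := mul_comm _ _
    calc (∫⁻ u in Set.Icc (-1:ℝ) 1,
            α (g t (h (u + c) x)) * ENNReal.ofReal (Real.exp (-(u + c) ^ 2)))
        ≤ ∫⁻ u in Set.Icc (-1:ℝ) 1, ENNReal.ofReal (f2 n) * α (g t (h u (h c x))) := by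
          refine lintegral_mono_ae ?_
          filter_upwards [ae_restrict_mem measurableSet_Icc] with u hu
          exact hpt u hu
      _ = ENNReal.ofReal (f2 n) * ∫⁻ u in Set.Icc (-1:ℝ) 1, α (g t (h u (h c x))) :=
          lintegral_const_mul' _ _ ENNReal.ofReal_ne_top
      _ ≤ ENNReal.ofReal (f2 n) * (ENNReal.ofReal abar * α (h c x) + ENNReal.ofReal bbar) :=
          by gcongr; exact hint t ht (h c x)
      _ ≤ ENNReal.ofReal (f2 n) * (ENNReal.ofReal abar *
            (ENNReal.ofReal (C * (1 + 2*|(n:ℝ)|) ^ σ) * α x) + ENNReal.ofReal bbar) := by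
          gcongr
          have := hpoly c x
          rwa [habs] at this
      _ = ENNReal.ofReal (abar * C * f1 n) * α x + ENNReal.ofReal (bbar * f2 n) := by
          rw [mul_add]
          congr 1
          · rw [← mul_assoc, ← mul_assoc, ← ENNReal.ofReal_mul (hf2nn n),
              ← ENNReal.ofReal_mul (by positivity)]
            congr 2
            rw [hf1]
            ring
          · rw [← ENNReal.ofReal_mul (hf2nn n)]
            congr 1
            ring
  -- Covering of ℝ
  have cover : (Set.univ : Set ℝ) ⊆ ⋃ n : ℤ, Set.Icc (2*(n:ℝ) - 1) (2*(n:ℝ) + 1) := by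
    intro s _
    refine Set.mem_iUnion.2 ⟨⌊(s+1)/2⌋, ?_⟩
    have h1 := Int.floor_le ((s+1)/2)
    have h2 := Int.lt_floor_add_one ((s+1)/2)
    constructor <;> [linarith; linarith]
  calc (∫⁻ s : ℝ, α (g t (h s x)) * ENNReal.ofReal (Real.exp (-s ^ 2)))
      = ∫⁻ s in (Set.univ : Set ℝ), α (g t (h s x)) * ENNReal.ofReal (Real.exp (-s ^ 2)) := by
        rw [setLIntegral_univ]
    _ ≤ ∫⁻ s in ⋃ n : ℤ, Set.Icc (2*(n:ℝ) - 1) (2*(n:ℝ) + 1),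
          α (g t (h s x)) * ENNReal.ofReal (Real.exp (-s ^ 2)) :=
        lintegral_mono_set cover
    _ ≤ ∑' n : ℤ, ∫⁻ s in Set.Icc (2*(n:ℝ) - 1) (2*(n:ℝ) + 1),
          α (g t (h s x)) * ENNReal.ofReal (Real.exp (-s ^ 2)) :=
        lintegral_iUnion_le _ _
    _ ≤ ∑' n : ℤ, (ENNReal.ofReal (abar * C * f1 n) * α x + ENNReal.ofReal (bbar * f2 n)) :=
        ENNReal.tsum_le_tsum (fun n => per_n n)
    _ = (∑' n : ℤ, ENNReal.ofReal (abar * C * f1 n)) * α x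
          + ∑' n : ℤ, ENNReal.ofReal (bbar * f2 n) := by
        rw [ENNReal.tsum_add, ENNReal.tsum_mul_right]
    _ = ENNReal.ofReal (abar * C * K) * α x + ENNReal.ofReal (bbar * K2) := by
        congr 1
        · congr 1
          rw [← ENNReal.ofReal_tsum_of_nonneg (fun n => by positivity) (hsum1.mul_left _)]
          congr 1
          rw [hK, tsum_mul_left]
        · rw [← ENNReal.ofReal_tsum_of_nonneg (fun n => by positivity) (hsum2.mul_left _)]
          congr 1
          rw [hK2, tsum_mul_left]
    _ ≤ ENNReal.ofReal a * α x + ENNReal.ofReal (bbar * (K2 + 1)) := by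
        gcongr
        · -- abar * C * K ≤ a
          have h1 : abar ≤ a / (C * (K+1)) := min_le_left _ _
          have h2 : abar * (C * (K+1)) ≤ a := by
            rw [← div_mul_cancel₀ a (show C * (K+1) ≠ 0 by positivity)]
            exact mul_le_mul_of_nonneg_right h1 (by positivity)
          nlinarith [habar.1]
        · nlinarith
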